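/- (No referral influence, coefficient matrix is Hurwitz) Let ε > 0, λ₅ > 0 and λ₂ = λ₆ = 0. The coefficient matrix of the (affine) customer-dynamics model, J = [[−ε−β₁−λ₅, λ₇, λ₁+mλ₄, 0], [λ₅, −ε−β₂−λ₇, 0, λ₃+mλ₄], [β₁, 0, −ε−λ₅−λ₁−mλ₄, λ₇], [0, β₂, λ₅, −ε−λ₇−λ₃−mλ₄]] (in the coordinate order (C, R, P_C, P_R)), has −ε and −ε−λ₅−λ₇ among its eigenvalues, and every complex eigenvalue of J has negative real part. -/

import Mathlib

open Real Filter Topology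

/-- The customer-dynamics model: `(C, R, PC, PR)` solves the system on `[t0, ∞)`. -/
def IsSolution (l1 l2 l3 l4 l5 l6 l7 b1 b2 eps gam m mR al t0 : ℝ)
    (C R PC PR : ℝ → ℝ) : Prop :=
  ∀ t : ℝ, t0 ≤ t →
    HasDerivAt C (l7 * R t - (eps + b1 + l5) * C t + (l1 + m * l4) * PC t
      + l2 * R t * PC t) t ∧
    HasDerivAt R (l5 * C t - (eps + b2 + l7) * R t + (l3 + m * l4) * PR t
      + (l2 + mR * l6) * R t * PR t) t ∧
    HasDerivAt PC ((1 - al) * gam + b1 * C t + l7 * PR t - (eps + l5 + l1 + m * l4) * PC t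
      - l2 * R t * PC t) t ∧
    HasDerivAt PR (al * gam + b2 * R t + l5 * PC t - (eps + l7 + l3 + m * l4) * PR t
      - (l2 + mR * l6) * R t * PR t) t

/-- An equilibrium of the customer-dynamics model: all four right-hand sides vanish. -/
def IsEquilibrium (l1 l2 l3 l4 l5 l6 l7 b1 b2 eps gam m mR al : ℝ)
    (C R PC PR : ℝ) : Prop :=
  l7 * R - (eps + b1 + l5) * C + (l1 + m * l4) * PC + l2 * R * PC = 0 ∧
  l5 * C - (eps + b2 + l7) * R + (l3 + m * l4) * PR + (l2 + mR * l6) * R * PR = 0 ∧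
  (1 - al) * gam + b1 * C + l7 * PR - (eps + l5 + l1 + m * l4) * PC - l2 * R * PC = 0 ∧
  al * gam + b2 * R + l5 * PC - (eps + l7 + l3 + m * l4) * PR - (l2 + mR * l6) * R * PR = 0

set_option maxHeartbeats 1000000 in
theorem det4_aux (a b c d e f g h i j k l m n o p : ℂ) :
    (!![a,b,c,d; e,f,g,h; i,j,k,l; m,n,o,p] : Matrix (Fin 4) (Fin 4) ℂ).det =
      a*(f*(k*p-l*o) - g*(j*p-l*n) + h*(j*o-k*n))
      - b*(e*(k*p-l*o) - g*(i*p-l*m) + h*(i*o-k*m))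
      + c*(e*(j*p-l*n) - f*(i*p-l*m) + h*(i*n-j*m))
      - d*(e*(j*o-k*n) - f*(i*o-k*m) + g*(i*n-j*m)) := by
  rw [Matrix.det_succ_row_zero]
  simp [Fin.sum_univ_succ, Matrix.det_fin_three, Fin.succAbove]
  ring

set_option maxHeartbeats 1000000 in
theorem no_referral_influence_hurwitz (l1 l2 l3 l4 l5 l6 l7 b1 b2 eps gam m mR al : ℝ)
    (J : Matrix (Fin 4) (Fin 4) ℂ)
    (hl1 : 0 ≤ l1) (hl2 : 0 ≤ l2) (hl3 : 0 ≤ l3) (hl4 : 0 ≤ l4) (hl5 : 0 ≤ l5)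
    (hl6 : 0 ≤ l6) (hl7 : 0 ≤ l7) (hb1 : 0 ≤ b1) (hb2 : 0 ≤ b2) (heps0 : 0 ≤ eps)
    (hgam : 0 ≤ gam) (hm : 0 ≤ m) (hmR : 0 ≤ mR) (hal0 : 0 ≤ al) (hal1 : al ≤ 1)
    (heps : 0 < eps) (hl5pos : 0 < l5)
    (hl2 : l2 = 0) (hl6 : l6 = 0)
    (hJ : J = !![((-eps - b1 - l5 : ℝ) : ℂ), ((l7 : ℝ) : ℂ), ((l1 + m * l4 : ℝ) : ℂ), 0;
      ((l5 : ℝ) : ℂ), ((-eps - b2 - l7 : ℝ) : ℂ), 0, ((l3 + m * l4 : ℝ) : ℂ);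
      ((b1 : ℝ) : ℂ), 0, ((-eps - l5 - l1 - m * l4 : ℝ) : ℂ), ((l7 : ℝ) : ℂ);
      0, ((b2 : ℝ) : ℂ), ((l5 : ℝ) : ℂ), ((-eps - l7 - l3 - m * l4 : ℝ) : ℂ)]) :
    ((-eps : ℝ) : ℂ) ∈ spectrum ℂ J ∧
    ((-eps - l5 - l7 : ℝ) : ℂ) ∈ spectrum ℂ J ∧
    ∀ μ ∈ spectrum ℂ J, μ.re < 0 := by
  set A : ℝ := eps + l5 + l1 + m * l4 + b1 with hA
  set B : ℝ := eps + l7 + l3 + m * l4 + b2 with hB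
  have hM : ∀ μ : ℂ, μ • (1 : Matrix (Fin 4) (Fin 4) ℂ) - J =
      !![μ - ((-eps - b1 - l5 : ℝ) : ℂ), -((l7 : ℝ) : ℂ), -((l1 + m * l4 : ℝ) : ℂ), 0;
         -((l5 : ℝ) : ℂ), μ - ((-eps - b2 - l7 : ℝ) : ℂ), 0, -((l3 + m * l4 : ℝ) : ℂ);
         -((b1 : ℝ) : ℂ), 0, μ - ((-eps - l5 - l1 - m * l4 : ℝ) : ℂ), -((l7 : ℝ) : ℂ);
         0, -((b2 : ℝ) : ℂ), -((l5 : ℝ) : ℂ), μ - ((-eps - l7 - l3 - m * l4 : ℝ) : ℂ)] := by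
    intro μ
    subst hJ
    ext i j
    fin_cases i <;> fin_cases j <;>
      simp [Matrix.smul_apply, Matrix.sub_apply, Matrix.one_apply]
  have hdet : ∀ μ : ℂ, (μ • (1 : Matrix (Fin 4) (Fin 4) ℂ) - J).det =
      (μ + eps) * (μ + eps + l5 + l7) * ((μ + A) * (μ + B) - (l5 : ℂ) * (l7 : ℂ)) := by
    intro μ
    rw [hM, det4_aux, hA, hB]
    push_cast
    ring
  have hspec : ∀ μ : ℂ, μ ∈ spectrum ℂ J ↔
      (μ + eps) * (μ + eps + l5 + l7) * ((μ + A) * (μ + B) - (l5 : ℂ) * (l7 : ℂ)) = 0 := by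
    intro μ
    rw [spectrum.mem_iff, Matrix.isUnit_iff_isUnit_det, isUnit_iff_ne_zero, not_not,
      Algebra.algebraMap_eq_smul_one, hdet]
  refine ⟨?_, ?_, ?_⟩
  · rw [hspec]
    have : ((-eps : ℝ) : ℂ) + eps = 0 := by push_cast; ring
    rw [this, zero_mul, zero_mul]
  · rw [hspec]
    have : ((-eps - l5 - l7 : ℝ) : ℂ) + eps + l5 + l7 = 0 := by push_cast; ring
    rw [this, mul_zero, zero_mul]
  · intro μ hμ
    have hAe : eps + l5 ≤ A := by rw [hA]; nlinarith
    have hBe : eps + l7 ≤ B := by rw [hB]; nlinarith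
    have hApos : 0 < A := by linarith
    have hBpos : 0 < B := by linarith
    have hABlt : l5 * l7 < A * B := by nlinarith
    rcases mul_eq_zero.mp ((hspec μ).mp hμ) with h | h
    · rcases mul_eq_zero.mp h with h | h
      · have := congrArg Complex.re h
        simp at this
        linarith
      · have := congrArg Complex.re h
        simp at this
        linarith
    · -- quadratic case
      have hre := congrArg Complex.re h
      have him := congrArg Complex.im h
      simp [Complex.add_re, Complex.add_im, Complex.sub_re, Complex.sub_im, Complex.mul_re,
        Complex.mul_im, Complex.ofReal_re, Complex.ofReal_im] at hre him
      set x := μ.re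
      set y := μ.im
      have him' : y * (2 * x + A + B) = 0 := by nlinarith [him]
      rcases mul_eq_zero.mp him' with hy | hx
      · by_contra hcon
        push_neg at hcon
        nlinarith [hre, hy]
      · linarith
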